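/- Let (F,θ) be an ID-field of characteristic p > 0, let E be a PPV-field over F with PPV-ring R ⊆ E, and let F̃ be an intermediate ID-field, F ⊆ F̃ ⊆ E, which is itself a PPV-field over F with PPV-ring R̃ ⊆ F̃ (so Quot(R̃) = F̃). Then R̃ = F̃ ∩ R. -/

import Mathlib

open scoped TensorProduct

/-- `binom(i+j, i)` for multi-indices: `∏ μ, (i μ + j μ).choose (i μ)`. -/
def multiChoose {m : ℕ} (i j : Fin m →₀ ℕ) : ℕ :=
  ∏ μ : Fin m, Nat.choose (i μ + j μ) (i μ)

/-- An `m`-variate iterative derivation on a commutative ring `R`: a ring homomorphism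
`θ : R → R[[T_1,…,T_m]]`, written `θ(r) = Σ_k θ^{(k)}(r)·T^k`, with `θ^{(0)} = id` and
`θ^{(i)} ∘ θ^{(j)} = binom(i+j,i)·θ^{(i+j)}` for all multi-indices `i, j`. -/
structure IterativeDerivation (m : ℕ) (R : Type*) [CommRing R] where
  toRingHom : R →+* MvPowerSeries (Fin m) R
  coeff_zero : ∀ r : R, MvPowerSeries.coeff (R := R) 0 (toRingHom r) = r
  iterate : ∀ (i j : Fin m →₀ ℕ) (r : R),
    MvPowerSeries.coeff (R := R) i (toRingHom (MvPowerSeries.coeff (R := R) j (toRingHom r))) =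
      multiChoose i j • MvPowerSeries.coeff (R := R) (i + j) (toRingHom r)

namespace IterativeDerivation

/-- The coefficient maps `θ^{(k)} : R → R` of an iterative derivation. -/
noncomputable def D {m : ℕ} {R : Type*} [CommRing R] (θ : IterativeDerivation m R)
    (k : Fin m →₀ ℕ) (r : R) : R :=
  MvPowerSeries.coeff (R := R) k (θ.toRingHom r)

end IterativeDerivation

/-- An ID-ring extension: the iterative derivation `θR` on `R` restricts to `θF` on `F`
(via the algebra map). -/
def IterativeDerivation.Extends {m : ℕ} {F R : Type*} [CommRing F] [CommRing R] [Algebra F R]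
    (θF : IterativeDerivation m F) (θR : IterativeDerivation m R) : Prop :=
  ∀ (k : Fin m →₀ ℕ) (f : F), θR.D k (algebraMap F R f) = algebraMap F R (θF.D k f)

/-- `R` is ID-simple: no nontrivial ideals stable under all the `θ^{(k)}`. -/
def IterativeDerivation.IDSimple {m : ℕ} {R : Type*} [CommRing R]
    (θ : IterativeDerivation m R) : Prop :=
  ∀ I : Ideal R, (∀ (k : Fin m →₀ ℕ), ∀ x ∈ I, θ.D k x ∈ I) → I = ⊥ ∨ I = ⊤

/-- The coefficient matrices `A_k` of an iterative differential equation `θ(y) = A·y`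
over `(F, θ)`: `A_0 = 1` and
`binom(k+l,l)·A_{k+l} = Σ_{i+j=l} θ^{(i)}(A_k)·A_j` for all `k, l`. -/
def IsIDE {m n : ℕ} {F : Type*} [Field F] (θ : IterativeDerivation m F)
    (A : (Fin m →₀ ℕ) → Matrix (Fin n) (Fin n) F) : Prop :=
  A 0 = 1 ∧
  ∀ k l : Fin m →₀ ℕ,
    multiChoose l k • A (k + l) =
      ∑ ij ∈ Finset.HasAntidiagonal.antidiagonal l, (A k).map (θ.D ij.1) * A ij.2

/-- `Y ∈ GL_n(R)` is a fundamental solution matrix for the IDE `θ(y) = A·y`: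
`θ^{(k)}(Y) = A_k·Y` (entrywise) for all `k`. -/
def IsFundamentalMatrix {m n : ℕ} {F R : Type*} [Field F] [CommRing R] [Algebra F R]
    (θR : IterativeDerivation m R) (A : (Fin m →₀ ℕ) → Matrix (Fin n) (Fin n) F)
    (Y : Matrix (Fin n) (Fin n) R) : Prop :=
  IsUnit Y.det ∧
  ∀ k : Fin m →₀ ℕ, Y.map (θR.D k) = (A k).map (algebraMap F R) * Y

/-- Condition (4) of a PPV-ring: the constants of `R` are exactly (the images of) the
constants of `F`. -/
def ConstantsEq {m : ℕ} {F R : Type*} [CommRing F] [CommRing R] [Algebra F R]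
    (θF : IterativeDerivation m F) (θR : IterativeDerivation m R) : Prop :=
  ∀ r : R, (∀ k : Fin m →₀ ℕ, k ≠ 0 → θR.D k r = 0) →
    ∃ f : F, (∀ k : Fin m →₀ ℕ, k ≠ 0 → θF.D k f = 0) ∧ algebraMap F R f = r

/-- `(R, θR)` is a pseudo Picard–Vessiot ring over `(F, θF)` for the IDE given by `A`:
it is ID-simple, has a fundamental solution matrix `Y` which together with `det(Y)⁻¹`
generates `R` as an `F`-algebra, and has the same constants as `F`. -/
def IsPPVRing {m n : ℕ} {F R : Type*} [Field F] [CommRing R] [Algebra F R]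
    (θF : IterativeDerivation m F) (θR : IterativeDerivation m R)
    (A : (Fin m →₀ ℕ) → Matrix (Fin n) (Fin n) F) : Prop :=
  θF.Extends θR ∧ θR.IDSimple ∧
  (∃ Y : Matrix (Fin n) (Fin n) R, IsFundamentalMatrix θR A Y ∧
    Algebra.adjoin F
      ((Set.range fun ij : Fin n × Fin n => Y ij.1 ij.2) ∪ {Ring.inverse Y.det}) = ⊤) ∧
  ConstantsEq θF θR

/-- `S` (an `F`-subalgebra of the ID-field `E`, stable under the iterative derivation of
`E`) is a PPV-ring over `F` for the IDE given by `A`: it is stable under the derivation,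
ID-simple, contains a fundamental solution matrix `Y` which together with `det(Y)⁻¹`
generates `S` as an `F`-algebra, and its constants are exactly the constants of `F`. -/
def IsPPVSubalgebra {m n : ℕ} {F E : Type*} [Field F] [Field E] [Algebra F E]
    (θF : IterativeDerivation m F) (θE : IterativeDerivation m E)
    (S : Subalgebra F E) (A : (Fin m →₀ ℕ) → Matrix (Fin n) (Fin n) F) : Prop :=
  (∀ (k : Fin m →₀ ℕ), ∀ x ∈ S, θE.D k x ∈ S) ∧
  (∀ I : Ideal S,
    (∀ (k : Fin m →₀ ℕ) (x : S), x ∈ I → ∀ y : S, (y : E) = θE.D k (x : E) → y ∈ I) →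
      I = ⊥ ∨ I = ⊤) ∧
  (∃ Y : Matrix (Fin n) (Fin n) E,
    (∀ i j : Fin n, Y i j ∈ S) ∧ Y.det ≠ 0 ∧ Y.det⁻¹ ∈ S ∧
    (∀ k : Fin m →₀ ℕ, Y.map (θE.D k) = (A k).map (algebraMap F E) * Y) ∧
    Algebra.adjoin F
      ((Set.range fun ij : Fin n × Fin n => Y ij.1 ij.2) ∪ {Y.det⁻¹}) = S) ∧
  (∀ x ∈ S, (∀ k : Fin m →₀ ℕ, k ≠ 0 → θE.D k x = 0) →
    ∃ f : F, (∀ k : Fin m →₀ ℕ, k ≠ 0 → θF.D k f = 0) ∧ algebraMap F E f = x)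

/-- The quotient field of a subset `S` of a field `E`, as a subset of `E`. -/
def quotSet {E : Type*} [Field E] (S : Set E) : Set E :=
  {e : E | ∃ r ∈ S, ∃ s ∈ S, s ≠ 0 ∧ e = r / s}

-- helper lemmas
lemma multiChoose_zero_left {m : ℕ} (l : Fin m →₀ ℕ) : multiChoose 0 l = 1 := by
  simp [multiChoose]

lemma multiChoose_zero_right {m : ℕ} (i : Fin m →₀ ℕ) : multiChoose i 0 = 1 := by
  simp [multiChoose]

namespace IterativeDerivation

variable {m : ℕ} {E : Type*} [CommRing E] (θ : IterativeDerivation m E)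

lemma D_zero_eq (r : E) : θ.D 0 r = r := θ.coeff_zero r

lemma D_zero' (k : Fin m →₀ ℕ) : θ.D k 0 = 0 := by
  simp [D]

lemma D_add (k : Fin m →₀ ℕ) (x y : E) : θ.D k (x + y) = θ.D k x + θ.D k y := by
  simp [D]

lemma D_mul (k : Fin m →₀ ℕ) (x y : E) :
    θ.D k (x * y) = ∑ ij ∈ Finset.HasAntidiagonal.antidiagonal k, θ.D ij.1 x * θ.D ij.2 y := by
  simp [D, MvPowerSeries.coeff_mul]

lemma D_D (i l : Fin m →₀ ℕ) (x : E) :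
    θ.D i (θ.D l x) = multiChoose i l • θ.D (i + l) x := θ.iterate i l x

end IterativeDerivation

-- degree of a multi-index
def mdeg {m : ℕ} (k : Fin m →₀ ℕ) : ℕ := ∑ μ : Fin m, k μ

lemma mdeg_lt {m : ℕ} {i j k : Fin m →₀ ℕ} (h : i + j = k) (hj : j ≠ 0) :
    mdeg i < mdeg k := by
  have hadd : mdeg k = mdeg i + mdeg j := by
    rw [← h]; simp [mdeg, Finsupp.add_apply, Finset.sum_add_distrib]
  have hjpos : mdeg j ≠ 0 := by
    intro hsum
    apply hj
    ext μ
    simpa using Finset.sum_eq_zero_iff.mp hsum μ (Finset.mem_univ μ)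
  omega

open MvPowerSeries in
/-- If `Y` is a fundamental matrix for the IDE with matrices `A` (with `A 0 = 1`), then every
`θ^{(k)}(det Y⁻¹)` is an `F`-multiple of `det Y⁻¹`. -/
lemma D_det_inv {m n : ℕ} {F E : Type*} [Field F] [Field E] [Algebra F E]
    (θ : IterativeDerivation m E) (A : (Fin m →₀ ℕ) → Matrix (Fin n) (Fin n) F)
    (hA0 : A 0 = 1) (Y : Matrix (Fin n) (Fin n) E)
    (hY : ∀ k, Y.map (θ.D k) = (A k).map (algebraMap F E) * Y) :
    ∀ k, ∃ c : F, θ.D k Y.det⁻¹ = algebraMap F E c * Y.det⁻¹ := by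
  intro k
  by_cases hd : Y.det = 0
  · exact ⟨0, by simp [hd, IterativeDerivation.D_zero']⟩
  let G : Matrix (Fin n) (Fin n) (MvPowerSeries (Fin m) F) := fun a b => (fun l => A l a b)
  have hGcoeff : ∀ (l : Fin m →₀ ℕ) (a b), MvPowerSeries.coeff (R := F) l (G a b) = A l a b :=
    fun l a b => rfl
  have hθY : Y.map θ.toRingHom =
      (G.map (MvPowerSeries.map (σ := Fin m) (algebraMap F E))) * Y.map (MvPowerSeries.C (σ := Fin m) (R := E)) := by
    ext a b l
    have h1 : θ.D l (Y a b) = ∑ c, algebraMap F E (A l a c) * Y c b := by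
      have := congrFun (congrFun (hY l) a) b
      simpa [Matrix.mul_apply, Matrix.map_apply] using this
    simp only [Matrix.map_apply, Matrix.mul_apply, map_sum, MvPowerSeries.coeff_mul_C,
      MvPowerSeries.coeff_map, hGcoeff]
    exact h1
  have hdet : θ.toRingHom Y.det =
      MvPowerSeries.map (σ := Fin m) (algebraMap F E) G.det * MvPowerSeries.C (σ := Fin m) (R := E) Y.det := by
    have h1 := RingHom.map_det θ.toRingHom Y
    rw [RingHom.mapMatrix_apply, hθY, Matrix.det_mul] at h1
    rw [h1]
    congr 1
    · rw [← RingHom.mapMatrix_apply, ← RingHom.map_det]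
    · rw [← RingHom.mapMatrix_apply, ← RingHom.map_det]
  have hg0 : MvPowerSeries.constantCoeff (σ := Fin m) (R := F) G.det = 1 := by
    have h1 := RingHom.map_det (MvPowerSeries.constantCoeff (σ := Fin m) (R := F)) G
    rw [h1, RingHom.mapMatrix_apply]
    have : G.map (MvPowerSeries.constantCoeff (σ := Fin m) (R := F)) = A 0 := by
      ext a b
      simp only [Matrix.map_apply, ← MvPowerSeries.coeff_zero_eq_constantCoeff_apply]
      exact hGcoeff 0 a b
    rw [this, hA0, Matrix.det_one]
  set H := MvPowerSeries.invOfUnit G.det 1 with hH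
  have hgH : G.det * H = 1 := MvPowerSeries.mul_invOfUnit _ _ (by rw [hg0]; rfl)
  have hinv : θ.toRingHom Y.det⁻¹ =
      MvPowerSeries.map (σ := Fin m) (algebraMap F E) H * MvPowerSeries.C (σ := Fin m) (R := E) Y.det⁻¹ := by
    have h2 : θ.toRingHom Y.det * θ.toRingHom Y.det⁻¹ = 1 := by
      rw [← map_mul, mul_inv_cancel₀ hd, map_one]
    have h1 : θ.toRingHom Y.det *
        (MvPowerSeries.map (σ := Fin m) (algebraMap F E) H * MvPowerSeries.C (σ := Fin m) (R := E) Y.det⁻¹) = 1 := by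
      rw [hdet]
      calc MvPowerSeries.map (σ := Fin m) (algebraMap F E) G.det * MvPowerSeries.C (σ := Fin m) (R := E) Y.det *
            (MvPowerSeries.map (σ := Fin m) (algebraMap F E) H * MvPowerSeries.C (σ := Fin m) (R := E) Y.det⁻¹)
          = (MvPowerSeries.map (σ := Fin m) (algebraMap F E) (G.det * H)) *
            (MvPowerSeries.C (σ := Fin m) (R := E) (Y.det * Y.det⁻¹)) := by
            rw [map_mul, map_mul]; ring
        _ = 1 := by rw [hgH, mul_inv_cancel₀ hd, map_one, map_one, one_mul]
    calc θ.toRingHom Y.det⁻¹ = θ.toRingHom Y.det⁻¹ * (θ.toRingHom Y.det *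
          (MvPowerSeries.map (σ := Fin m) (algebraMap F E) H * MvPowerSeries.C (σ := Fin m) (R := E) Y.det⁻¹)) := by
          rw [h1, mul_one]
      _ = (θ.toRingHom Y.det * θ.toRingHom Y.det⁻¹) *
          (MvPowerSeries.map (σ := Fin m) (algebraMap F E) H * MvPowerSeries.C (σ := Fin m) (R := E) Y.det⁻¹) := by ring
      _ = _ := by rw [h2, one_mul]
  refine ⟨MvPowerSeries.coeff (R := F) k H, ?_⟩
  rw [IterativeDerivation.D, hinv]
  simp [MvPowerSeries.coeff_mul_C, MvPowerSeries.coeff_map]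

/-- Generic denominator-ideal argument: if `S` is θ-stable and ID-simple, `v` is a set of
elements of `E` whose θ-derivatives stay in the `F`-span of `v`, and there is a nonzero common
denominator `b ∈ S` for `v`, then `v ⊆ S`. -/
lemma denom_mem {m : ℕ} {F E : Type*} [Field F] [Field E] [Algebra F E]
    (θ : IterativeDerivation m E) (S : Subalgebra F E)
    (hstab : ∀ (k : Fin m →₀ ℕ), ∀ x ∈ S, θ.D k x ∈ S)
    (hsimp : ∀ I : Ideal S,
      (∀ (k : Fin m →₀ ℕ) (x : S), x ∈ I → ∀ y : S, (y : E) = θ.D k (x : E) → y ∈ I) →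
        I = ⊥ ∨ I = ⊤)
    (v : Set E)
    (hv : ∀ w ∈ v, ∀ j : Fin m →₀ ℕ, θ.D j w ∈ Submodule.span F v)
    (b : E) (hb : b ∈ S) (hb0 : b ≠ 0) (hbv : ∀ w ∈ v, b * w ∈ S) :
    ∀ w ∈ v, w ∈ S := by
  -- the span version of the denominator condition
  have hspan : ∀ c : E, (∀ w ∈ v, c * w ∈ S) → ∀ w ∈ Submodule.span F v, c * w ∈ S := by
    intro c hc w hw
    induction hw using Submodule.span_induction with
    | mem w hw => exact hc w hw
    | zero => simpa using S.zero_mem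
    | add x y _ _ hx hy => rw [mul_add]; exact S.add_mem hx hy
    | smul f x _ hx =>
        rw [Algebra.smul_def, mul_left_comm]
        exact S.mul_mem (S.algebraMap_mem f) hx
  -- the denominator ideal
  let I : Ideal S :=
    { carrier := {r : S | ∀ w ∈ v, (r : E) * w ∈ S}
      add_mem' := by
        intro x y hx hy w hw
        rw [Subalgebra.coe_add, add_mul]
        exact S.add_mem (hx w hw) (hy w hw)
      zero_mem' := by intro w hw; simpa using S.zero_mem
      smul_mem' := by
        intro c x hx w hw
        simp only [smul_eq_mul, MulMemClass.coe_mul, mul_assoc]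
        exact S.mul_mem c.2 (hx w hw) }
  have hmemI : ∀ r : S, r ∈ I ↔ ∀ w ∈ v, (r : E) * w ∈ S := fun r => Iff.rfl
  -- θ-stability of I
  have hIstab' : ∀ N : ℕ, ∀ (k : Fin m →₀ ℕ), mdeg k < N →
      ∀ x : S, x ∈ I → ∀ y : S, (y : E) = θ.D k (x : E) → y ∈ I := by
    intro N
    induction N with
    | zero => intro k hk; omega
    | succ N IH =>
      intro k hkN r hr y hy w hw
      rw [hy]
      -- θ.D k (r * w) = θ.D k r * w + (lower-order terms)
      have hk1 : θ.D k ((r : E) * w) =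
          ∑ ij ∈ Finset.HasAntidiagonal.antidiagonal k, θ.D ij.1 (r : E) * θ.D ij.2 w := θ.D_mul k _ _
      have hk0mem : ((k, (0 : Fin m →₀ ℕ))) ∈ Finset.HasAntidiagonal.antidiagonal k := by
        rw [Finset.HasAntidiagonal.mem_antidiagonal, add_zero]
      rw [← Finset.add_sum_erase _ _ hk0mem] at hk1
      have hkey : θ.D k (r : E) * w =
          θ.D k ((r : E) * w) -
            ∑ ij ∈ (Finset.HasAntidiagonal.antidiagonal k).erase (k, 0), θ.D ij.1 (r : E) * θ.D ij.2 w := by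
        rw [hk1, θ.D_zero_eq]; ring
      rw [hkey]
      have h1 : θ.D k ((r : E) * w) ∈ S := hstab _ _ (hr w hw)
      have h2 : ∑ ij ∈ (Finset.HasAntidiagonal.antidiagonal k).erase (k, 0),
          θ.D ij.1 (r : E) * θ.D ij.2 w ∈ S := by
        apply S.sum_mem
        intro ij hij
        rw [Finset.mem_erase, Finset.HasAntidiagonal.mem_antidiagonal] at hij
        obtain ⟨hne, hsum⟩ := hij
        have hj0 : ij.2 ≠ 0 := by
          intro h0
          apply hne
          have : ij.1 = k := by rw [← hsum, h0, add_zero]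
          rw [Prod.ext_iff]; exact ⟨this, h0⟩
        have hlt : mdeg ij.1 < mdeg k := mdeg_lt hsum hj0
        -- θ.D ij.1 r ∈ I by induction
        have hDr : θ.D ij.1 (r : E) ∈ S := hstab _ _ r.2
        have hDrI : (⟨θ.D ij.1 (r : E), hDr⟩ : S) ∈ I :=
          IH ij.1 (by omega) r hr _ rfl
        have := hspan _ (fun w' hw' => hDrI w' hw') (θ.D ij.2 w) (hv w hw ij.2)
        exact this
      exact S.sub_mem h1 h2
  have hIstab : ∀ (k : Fin m →₀ ℕ) (x : S), x ∈ I → ∀ y : S, (y : E) = θ.D k (x : E) → y ∈ I :=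
    fun k => hIstab' (mdeg k + 1) k (by omega)
  -- I is nonzero
  have hI0 : I ≠ ⊥ := by
    intro hbot
    have : (⟨b, hb⟩ : S) ∈ I := fun w hw => hbv w hw
    rw [hbot, Ideal.mem_bot] at this
    apply hb0
    exact congrArg Subtype.val this
  -- conclude
  rcases hsimp I hIstab with h | h
  · exact absurd h hI0
  · intro w hw
    have h1 : (1 : S) ∈ I := by rw [h]; trivial
    have := h1 w hw
    simpa using this

lemma mul_mem_of_span {F E : Type*} [Field F] [Field E] [Algebra F E] (S : Subalgebra F E)
    {v : Set E} {c : E} (hc : ∀ w ∈ v, c * w ∈ S) :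
    ∀ w ∈ Submodule.span F v, c * w ∈ S := by
  intro w hw
  induction hw using Submodule.span_induction with
  | mem w hw => exact hc w hw
  | zero => simpa using S.zero_mem
  | add x y _ _ hx hy => rw [mul_add]; exact S.add_mem hx hy
  | smul f x _ hx =>
      rw [Algebra.smul_def, mul_left_comm]
      exact S.mul_mem (S.algebraMap_mem f) hx

lemma denom_of_quotSet {F E : Type*} [Field F] [Field E] [Algebra F E]
    {S : Subalgebra F E} {v : Set E} (hq : v ⊆ quotSet (S : Set E)) :
    ∀ e ∈ v, ∃ s ∈ S, s ≠ 0 ∧ s * e ∈ S := by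
  intro e he
  obtain ⟨r, hr, s, hs, hs0, rfl⟩ := hq he
  exact ⟨s, hs, hs0, by rw [mul_div_cancel₀ _ hs0]; exact hr⟩

lemma common_denom {F E : Type*} [Field F] [Field E] [Algebra F E]
    (S : Subalgebra F E) (T : Finset E) (h : ∀ t ∈ T, ∃ s ∈ S, s ≠ 0 ∧ s * t ∈ S) :
    ∃ b ∈ S, b ≠ 0 ∧ ∀ t ∈ T, b * t ∈ S := by
  classical
  induction T using Finset.induction_on with
  | empty => exact ⟨1, S.one_mem, one_ne_zero, by simp⟩
  | @insert a T ha IH =>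
      obtain ⟨b, hb, hb0, hbT⟩ := IH (fun t ht => h t (Finset.mem_insert_of_mem ht))
      obtain ⟨s, hs, hs0, hsa⟩ := h a (Finset.mem_insert_self a T)
      refine ⟨s * b, S.mul_mem hs hb, mul_ne_zero hs0 hb0, ?_⟩
      intro t ht
      rcases Finset.mem_insert.mp ht with rfl | ht
      · have : s * b * t = b * (s * t) := by ring
        rw [this]; exact S.mul_mem hb hsa
      · have : s * b * t = s * (b * t) := by ring
        rw [this]; exact S.mul_mem hs (hbT t ht)

/-- Every element of the PPV ring has θ-orbit contained in a finite-dimensional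
`F`-subspace of `E`. -/
lemma orbit_fg {m n : ℕ} {F E : Type*} [Field F] [Field E] [Algebra F E]
    (θF : IterativeDerivation m F) (θE : IterativeDerivation m E)
    (hext : ∀ (k : Fin m →₀ ℕ) (f : F), θE.D k (algebraMap F E f) = algebraMap F E (θF.D k f))
    (A : (Fin m →₀ ℕ) → Matrix (Fin n) (Fin n) F) (hA0 : A 0 = 1)
    (Y : Matrix (Fin n) (Fin n) E)
    (hY : ∀ k, Y.map (θE.D k) = (A k).map (algebraMap F E) * Y) :
    ∀ x ∈ Algebra.adjoin F
      ((Set.range fun ij : Fin n × Fin n => Y ij.1 ij.2) ∪ {Y.det⁻¹}),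
      ∃ W : Submodule F E, W.FG ∧ ∀ k, θE.D k x ∈ W := by
  intro x hx
  induction hx using Algebra.adjoin_induction with
  | mem w hw =>
      rcases hw with ⟨⟨a, b⟩, rfl⟩ | hw
      · refine ⟨Submodule.span F (Set.range fun ij : Fin n × Fin n => Y ij.1 ij.2),
          Submodule.fg_span (Set.finite_range _), fun k => ?_⟩
        have h1 : θE.D k (Y a b) = ∑ c, algebraMap F E (A k a c) * Y c b := by
          have := congrFun (congrFun (hY k) a) b
          simpa [Matrix.mul_apply, Matrix.map_apply] using this
        rw [h1]
        apply Submodule.sum_mem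
        intro c _
        rw [← Algebra.smul_def]
        exact Submodule.smul_mem _ _ (Submodule.subset_span ⟨(c, b), rfl⟩)
      · rcases hw with rfl
        refine ⟨Submodule.span F {Y.det⁻¹}, Submodule.fg_span (Set.finite_singleton _),
          fun k => ?_⟩
        obtain ⟨c, hc⟩ := D_det_inv θE A hA0 Y hY k
        rw [hc, ← Algebra.smul_def]
        exact Submodule.smul_mem _ _ (Submodule.subset_span rfl)
  | algebraMap f =>
      refine ⟨Submodule.span F {1}, Submodule.fg_span (Set.finite_singleton _), fun k => ?_⟩
      rw [hext k f]
      have : algebraMap F E (θF.D k f) = (θF.D k f) • (1 : E) := by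
        rw [Algebra.smul_def, mul_one]
      rw [this]
      exact Submodule.smul_mem _ _ (Submodule.subset_span rfl)
  | add x y _ _ hx hy =>
      obtain ⟨W1, hW1, h1⟩ := hx
      obtain ⟨W2, hW2, h2⟩ := hy
      exact ⟨W1 ⊔ W2, hW1.sup hW2, fun k => by
        rw [θE.D_add]
        exact Submodule.add_mem _ (Submodule.mem_sup_left (h1 k))
          (Submodule.mem_sup_right (h2 k))⟩
  | mul x y _ _ hx hy =>
      obtain ⟨W1, hW1, h1⟩ := hx
      obtain ⟨W2, hW2, h2⟩ := hy
      refine ⟨W1 * W2, hW1.mul hW2, fun k => ?_⟩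
      rw [θE.D_mul]
      exact Submodule.sum_mem _ fun ij _ => Submodule.mul_mem_mul (h1 ij.1) (h2 ij.2)

/-- Let `E` be a PPV-field over the ID-field `(F, θF)` of characteristic `p > 0` with
PPV-ring `R ⊆ E`, and let `Ftil` (`F ⊆ Ftil ⊆ E`) be an intermediate ID-field which is itself
a PPV-field over `F` with PPV-ring `Rtil ⊆ Ftil` (so `Quot(Rtil) = Ftil`). Then `Rtil = Ftil ∩ R`. -/
theorem ppvRing_of_intermediate_eq_inter
    (m n n2 p : ℕ) (hp : p.Prime)
    (F E : Type) [Field F] [CharP F p] [Field E] [Algebra F E]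
    (θF : IterativeDerivation m F) (θE : IterativeDerivation m E)
    (hext : θF.Extends θE)
    (R : Subalgebra F E)
    (A : (Fin m →₀ ℕ) → Matrix (Fin n) (Fin n) F) (hA : IsIDE θF A)
    (hR : IsPPVSubalgebra θF θE R A) (hq : quotSet (R : Set E) = Set.univ)
    (Ftil : IntermediateField F E)
    (hFtil : ∀ (k : Fin m →₀ ℕ), ∀ x ∈ Ftil, θE.D k x ∈ Ftil)
    (Rtil : Subalgebra F E) (hRtilFtil : (Rtil : Set E) ⊆ (Ftil : Set E))
    (Atil : (Fin m →₀ ℕ) → Matrix (Fin n2) (Fin n2) F) (hAtil : IsIDE θF Atil)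
    (hRtil : IsPPVSubalgebra θF θE Rtil Atil) (hq2 : quotSet (Rtil : Set E) = (Ftil : Set E)) :
    (Rtil : Set E) = (Ftil : Set E) ∩ (R : Set E) := by
    classical
  obtain ⟨hRstab, hRsimp, ⟨Y, hYmem, hYdet0, hYdetinv, hYfund, hYgen⟩, hRconst⟩ := hR
  obtain ⟨hTstab, hTsimp, ⟨Z, hZmem, hZdet0, hZdetinv, hZfund, hZgen⟩, hTconst⟩ := hRtil
  apply Set.eq_of_subset_of_subset
  · -- Rtil ⊆ Ftil ∩ R
    have hsub : (Rtil : Set E) ⊆ (R : Set E) := by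
      set v : Set E := (Set.range fun ij : Fin n2 × Fin n2 => Z ij.1 ij.2) ∪ {Z.det⁻¹} with hv
      have hvfin : v.Finite := (Set.finite_range _).union (Set.finite_singleton _)
      have hvquot : v ⊆ quotSet (R : Set E) := by rw [hq]; exact fun _ _ => trivial
      obtain ⟨b, hb, hb0, hbv⟩ := common_denom R hvfin.toFinset (fun t ht =>
        denom_of_quotSet hvquot t (hvfin.mem_toFinset.mp ht))
      have hvspan : ∀ w ∈ v, ∀ j : Fin m →₀ ℕ, θE.D j w ∈ Submodule.span F v := by
        rintro w (⟨⟨a, c⟩, rfl⟩ | rfl) j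
        · have h1 : θE.D j (Z a c) = ∑ d, algebraMap F E (Atil j a d) * Z d c := by
            have := congrFun (congrFun (hZfund j) a) c
            simpa [Matrix.mul_apply, Matrix.map_apply] using this
          rw [h1]
          apply Submodule.sum_mem
          intro d _
          rw [← Algebra.smul_def]
          exact Submodule.smul_mem _ _ (Submodule.subset_span (Or.inl ⟨(d, c), rfl⟩))
        · obtain ⟨e, he⟩ := D_det_inv θE Atil hAtil.1 Z hZfund j
          rw [he, ← Algebra.smul_def]
          exact Submodule.smul_mem _ _ (Submodule.subset_span (Or.inr rfl))
      have hmem := denom_mem θE R hRstab hRsimp v hvspan b hb hb0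
        (fun w hw => hbv w (hvfin.mem_toFinset.mpr hw))
      rw [← hZgen]
      intro w hw
      exact (Algebra.adjoin_le (fun u hu => hmem u hu) : Algebra.adjoin F _ ≤ R) hw
    exact fun x hx => ⟨hRtilFtil hx, hsub hx⟩
  · rintro x ⟨hxF, hxR⟩
    -- x lies in R = adjoin of the fundamental solutions, so its orbit is finite-dimensional
    have hxadj : x ∈ Algebra.adjoin F
        ((Set.range fun ij : Fin n × Fin n => Y ij.1 ij.2) ∪ {Y.det⁻¹}) := by
      rw [hYgen]; exact hxR
    obtain ⟨W, hWfg, hWorb⟩ := orbit_fg θF θE hext A hA.1 Y hYfund x hxadj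
    set g : (Fin m →₀ ℕ) → E := fun k => θE.D k x with hg
    have hVle : Submodule.span F (Set.range g) ≤ W :=
      Submodule.span_le.mpr (by rintro _ ⟨k, rfl⟩; exact hWorb k)
    haveI hWfd : FiniteDimensional F W := (Submodule.fg_iff_finiteDimensional _).1 hWfg
    haveI : FiniteDimensional F (Submodule.span F (Set.range g)) :=
      Submodule.finiteDimensional_of_le hVle
    have hVfg : (Submodule.span F (Set.range g)).FG :=
      (Submodule.fg_iff_finiteDimensional _).2 inferInstance
    obtain ⟨s, hs⟩ := hVfg
    have hchoice : ∀ y ∈ s, ∃ T : Finset E,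
        ↑T ⊆ Set.range g ∧ y ∈ Submodule.span F (T : Set E) := by
      intro y hy
      have hy1 : y ∈ Submodule.span F (Set.range g) := by
        rw [← hs]
        exact Submodule.subset_span hy
      exact Submodule.mem_span_finite_of_mem_span hy1
    choose T hT1 hT2 using hchoice
    set Tall : Finset E := s.attach.biUnion (fun y => T y.1 y.2) with hTall
    have hTsub : (Tall : Set E) ⊆ Set.range g := by
      intro t ht
      rw [hTall] at ht
      simp only [Finset.coe_biUnion, Finset.mem_coe, Set.mem_iUnion] at ht
      obtain ⟨y, _, hty⟩ := ht
      exact hT1 y.1 y.2 hty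
    have hVleT : Submodule.span F (Set.range g) ≤ Submodule.span F (Tall : Set E) := by
      rw [← hs]
      rw [Submodule.span_le]
      intro y hy
      refine Submodule.span_mono ?_ (hT2 y hy)
      intro t ht
      rw [hTall]
      simp only [Finset.coe_biUnion, Finset.mem_coe, Set.mem_iUnion]
      exact ⟨⟨y, hy⟩, Finset.mem_attach _ _, ht⟩
    -- common denominator in Rtil for the finite spanning set
    have hTFtil : ∀ t ∈ Tall, t ∈ quotSet (Rtil : Set E) := by
      intro t ht
      rw [hq2]
      obtain ⟨l, rfl⟩ := hTsub ht
      exact hFtil l x hxF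
    obtain ⟨b, hb, hb0, hbT⟩ := common_denom Rtil Tall (fun t ht =>
      denom_of_quotSet (fun u hu => hTFtil u hu) t ht)
    have hbv : ∀ w ∈ Set.range g, b * w ∈ Rtil := by
      intro w hw
      exact mul_mem_of_span Rtil hbT w (hVleT (Submodule.subset_span hw))
    have hvspan : ∀ w ∈ Set.range g, ∀ j : Fin m →₀ ℕ,
        θE.D j w ∈ Submodule.span F (Set.range g) := by
      rintro _ ⟨l, rfl⟩ j
      show θE.D j (θE.D l x) ∈ _
      rw [θE.D_D]
      exact nsmul_mem (Submodule.subset_span (Set.mem_range.mpr ⟨j + l, rfl⟩)) _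
    have hmem := denom_mem θE Rtil hTstab hTsimp (Set.range g) hvspan b hb hb0 hbv
    have hx0 : x = g 0 := (θE.D_zero_eq x).symm
    rw [hx0]
    exact hmem (g 0) ⟨0, rfl⟩
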